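/- For any unit interval order U on {1,...,n}, the word q(U) produced by the insertion algorithm is the area sequence of a Dyck path: its first entry is 0 and each entry is at most one more than the preceding entry. -/

import Mathlib

/-- A unit interval order on `Fin n`: `x ≺ y` implies `x < y`, and
`x ≺ y` implies `x' ≺ y'` for all `x' ≤ x` and `y' ≥ y`. -/
def IsUIO {n : ℕ} (r : Fin n → Fin n → Prop) : Prop :=
  (∀ x y, r x y → x < y) ∧
  (∀ x y, r x y → ∀ x' y', x' ≤ x → y ≤ y' → r x' y')

/-- The level function: `ℓ j = 0` if `j` is minimal, else `1 + max {ℓ i : i ≺ j}`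
(for a unit interval order, `i ≺ j` implies `i < j`). -/
def level {n : ℕ} (r : Fin n → Fin n → Prop) [DecidableRel r] : Fin n → ℕ
  | j =>
    ((Finset.univ.filter (fun i => r i j ∧ i < j)).attach).sup
      (fun i => level r i.1 + 1)
termination_by j => j.val
decreasing_by
  exact (Finset.mem_filter.mp i.2).2.2

/-- `C i`: the number of elements of level `ℓ(i) − 1` comparable to `i`. -/
def comparCount {n : ℕ} (r : Fin n → Fin n → Prop) [DecidableRel r] (i : Fin n) : ℕ :=
  (Finset.univ.filter (fun j => level r j + 1 = level r i ∧ (r j i ∨ r i j))).card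

/-- Position directly after the `k`-th occurrence of `v` in a list (`0` if `k = 0`). -/
def afterKth : List ℕ → ℕ → ℕ → ℕ
  | _, _, 0 => 0
  | [], _, _ + 1 => 0
  | x :: xs, v, k + 1 =>
    if x = v then
      if k = 0 then 1 else 1 + afterKth xs v k
    else 1 + afterKth xs v (k + 1)

/-- Starting from position `p`, skip the occurrences of the letter `l`. -/
def skipRun (q : List ℕ) (l p : ℕ) : ℕ :=
  p + ((q.drop p).takeWhile (fun x => x = l)).length

/-- The insertion algorithm: insert `ℓ(i)` directly after the occurrences of `ℓ(i)`
immediately following the `C_i`-th letter `ℓ(i) − 1`. -/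
def buildQ {n : ℕ} (r : Fin n → Fin n → Prop) [DecidableRel r] : ℕ → List ℕ
  | 0 => []
  | i + 1 =>
    let q := buildQ r i
    if h : i < n then
      let l := level r ⟨i, h⟩
      q.insertIdx (skipRun q l (afterKth q (l - 1) (comparCount r ⟨i, h⟩))) l
    else q

/-- The part listing `q(U)` produced by the insertion algorithm. -/
def qList {n : ℕ} (r : Fin n → Fin n → Prop) [DecidableRel r] : List ℕ :=
  buildQ r n


lemma afterKth_le_length (q : List ℕ) (v k : ℕ) : afterKth q v k ≤ q.length := by
  induction q generalizing k with
  | nil => cases k <;> simp [afterKth]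
  | cons x xs ih =>
    cases k with
    | zero => simp [afterKth]
    | succ k =>
      rw [afterKth]
      split
      · split
        · simp
        · have := ih k; simp; omega
      · have := ih (k+1); simp; omega

lemma skipRun_le_length (q : List ℕ) (l p : ℕ) (h : p ≤ q.length) :
    skipRun q l p ≤ q.length := by
  have h1 : ((q.drop p).takeWhile (fun x => x = l)).length ≤ (q.drop p).length :=
    (List.takeWhile_prefix _).length_le
  rw [List.length_drop] at h1
  unfold skipRun
  omega

lemma afterKth_spec (q : List ℕ) (v k : ℕ) (hk : 1 ≤ k) (hc : k ≤ q.count v) :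
    ∃ A B, q = A ++ v :: B ∧ afterKth q v k = A.length + 1 := by
  induction q generalizing k with
  | nil => simp at hc; omega
  | cons x xs ih =>
    cases k with
    | zero => omega
    | succ k =>
      by_cases hx : x = v
      · subst hx
        cases k with
        | zero => exact ⟨[], xs, by simp, by simp [afterKth]⟩
        | succ k =>
          have hc' : k + 1 ≤ xs.count x := by
            simp [List.count_cons] at hc; omega
          obtain ⟨A, B, hAB, hval⟩ := ih (k+1) (by omega) hc'
          refine ⟨x :: A, B, by simp [hAB], ?_⟩
          rw [afterKth]; simp [hval]; omega
      · have hc' : k + 1 ≤ xs.count v := by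
          simp [List.count_cons, hx] at hc; omega
        obtain ⟨A, B, hAB, hval⟩ := ih (k+1) (by omega) hc'
        refine ⟨x :: A, B, by simp [hAB], ?_⟩
        rw [afterKth]; simp [hx, hval]; omega

lemma head?_dropWhile_ne (p : ℕ → Bool) (B : List ℕ) :
    ∀ y ∈ (B.dropWhile p).head?, p y = false := by
  induction B with
  | nil => simp
  | cons x xs ih =>
    intro y hy
    rw [List.dropWhile_cons] at hy
    split at hy
    · exact ih y hy
    · simp only [List.head?_cons, Option.mem_def, Option.some.injEq] at hy
      rename_i hpx
      rw [← hy]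
      simpa using hpx

lemma insertIdx_eq (A B : List ℕ) (x : ℕ) :
    (A ++ B).insertIdx A.length x = A ++ x :: B := by
  induction A with
  | nil => simp
  | cons a A ih => simpa using ih

def QSmooth (q : List ℕ) : Prop :=
  (∀ x ∈ q.head?, x = 0) ∧ q.Chain' (fun a b => b ≤ a + 1)

lemma smooth_insert (A D : List ℕ) (l : ℕ)
    (hs : QSmooth (A ++ D))
    (hA : A = [] → l = 0)
    (hlast : ∀ a ∈ A.getLast?, l ≤ a + 1)
    (hle : ∀ a ∈ A.getLast?, a ≤ l) :
    QSmooth (A ++ l :: D) := by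
  obtain ⟨h0, hc⟩ := hs
  unfold List.Chain' at hc
  rw [List.isChain_append] at hc
  have hhead : ∀ y ∈ D.head?, y ≤ l + 1 := by
    intro y hy
    cases hA' : A.getLast? with
    | none =>
      rw [List.getLast?_eq_none_iff] at hA'
      subst hA'
      have := h0 y (by simpa using hy)
      omega
    | some a =>
      have h1 := hc.2.2 a (by rw [hA']; rfl) y hy
      have h2 := hle a (by rw [hA']; rfl)
      omega
  constructor
  · intro x hx
    cases A with
    | nil =>
      simp only [List.nil_append, List.head?_cons, Option.mem_def, Option.some.injEq] at hx
      rw [← hx]; exact hA rfl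
    | cons a A' =>
      apply h0
      simpa using hx
  · unfold List.Chain'
    rw [List.isChain_append]
    refine ⟨hc.1, ?_, ?_⟩
    · rw [List.isChain_cons]
      exact ⟨hhead, hc.2.1⟩
    · intro x hx y hy
      simp only [List.head?_cons, Option.mem_def, Option.some.injEq] at hy
      rw [← hy]
      exact hlast x hx

lemma insert_smooth (q : List ℕ) (l k : ℕ) (hs : QSmooth q)
    (hcase : (l = 0 ∧ k = 0) ∨ (1 ≤ l ∧ 1 ≤ k ∧ k ≤ q.count (l - 1))) :
    QSmooth (q.insertIdx (skipRun q l (afterKth q (l - 1) k)) l) := by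
  rcases hcase with ⟨hl, hk⟩ | ⟨hl, hk, hc⟩
  · subst hl hk
    have h0 : afterKth q (0 - 1) 0 = 0 := by rw [afterKth]
    rw [h0]
    set C := q.takeWhile (fun x => x = (0:ℕ)) with hC
    set D := q.dropWhile (fun x => x = (0:ℕ)) with hD
    have hq : q = C ++ D := (List.takeWhile_append_dropWhile ..).symm
    have hp : skipRun q 0 0 = C.length := by simp [skipRun, hC]
    rw [hp, hq, insertIdx_eq]
    refine smooth_insert _ _ _ (hq ▸ hs) (fun _ => rfl) (fun a _ => by omega) ?_
    intro a ha
    have : a ∈ C := List.mem_of_mem_getLast? ha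
    have := List.mem_takeWhile_imp (hC ▸ this)
    simp at this
    omega
  · obtain ⟨A0, B0, hAB, hafter⟩ := afterKth_spec q (l - 1) k hk hc
    rw [hafter]
    have hq1 : q = (A0 ++ [l - 1]) ++ B0 := by simp [hAB]
    have hdrop : q.drop (A0.length + 1) = B0 := by
      rw [hq1]
      have : A0.length + 1 = (A0 ++ [l - 1]).length := by simp
      rw [this, List.drop_left]
    set C := B0.takeWhile (fun x => x = l) with hCdef
    set D := B0.dropWhile (fun x => x = l) with hDdef
    have hB0 : B0 = C ++ D := (List.takeWhile_append_dropWhile ..).symm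
    set A := A0 ++ (l - 1) :: C with hAdef
    have hp : skipRun q l (A0.length + 1) = A.length := by
      simp [skipRun, hdrop, hAdef, ← hCdef]
      omega
    have hq2 : q = A ++ D := by
      rw [hAB, hB0, hAdef]
      simp
    have hlast : ∀ a ∈ A.getLast?, l ≤ a + 1 := by
      intro a ha
      have : a ∈ A := List.mem_of_mem_getLast? ha
      rw [hAdef, List.getLast?_append_cons] at ha
      have hmem : a ∈ (l - 1) :: C := List.mem_of_mem_getLast? ha
      rcases List.mem_cons.mp hmem with h | h
      · omega
      · have := List.mem_takeWhile_imp (hCdef ▸ h)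
        simp at this
        omega
    have hle : ∀ a ∈ A.getLast?, a ≤ l := by
      intro a ha
      rw [hAdef, List.getLast?_append_cons] at ha
      have hmem : a ∈ (l - 1) :: C := List.mem_of_mem_getLast? ha
      rcases List.mem_cons.mp hmem with h | h
      · omega
      · have := List.mem_takeWhile_imp (hCdef ▸ h)
        simp at this
        omega
    rw [hp, hq2, insertIdx_eq]
    refine smooth_insert _ _ _ (hq2 ▸ hs) ?_ hlast hle
    intro hAnil
    rw [hAdef] at hAnil
    simp at hAnil

lemma level_lt {n : ℕ} (r : Fin n → Fin n → Prop) [DecidableRel r] (i j : Fin n)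
    (hr : r i j) (hij : i < j) : level r i + 1 ≤ level r j := by
  conv_rhs => rw [level]
  have hmem : i ∈ Finset.univ.filter (fun x => r x j ∧ x < j) := by
    simp [hr, hij]
  exact Finset.le_sup (f := fun x => level r x.1 + 1) (Finset.mem_attach _ ⟨i, hmem⟩)

lemma level_pos_exists {n : ℕ} (r : Fin n → Fin n → Prop) [DecidableRel r] (j : Fin n)
    (h : level r j ≠ 0) : ∃ i, r i j ∧ i < j ∧ level r i + 1 = level r j := by
  rw [level] at h ⊢
  set s := Finset.univ.filter (fun i => r i j ∧ i < j) with hs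
  have hne : s.attach.Nonempty := by
    rw [Finset.attach_nonempty_iff]
    by_contra hemp
    rw [Finset.not_nonempty_iff_eq_empty] at hemp
    rw [hemp] at h
    simp at h
  obtain ⟨i, _, hi⟩ := Finset.exists_mem_eq_sup s.attach hne (fun i => level r i.1 + 1)
  have hmem := i.2
  simp only [hs, Finset.mem_filter] at hmem
  exact ⟨i.1, hmem.2.1, hmem.2.2, hi.symm⟩


lemma count_insertIdx (q : List ℕ) (p x m : ℕ) (hp : p ≤ q.length) :
    ((q.insertIdx p x).count m) = q.count m + if x = m then 1 else 0 := by
  have hlen : (q.take p).length = p := by simp [hp]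
  have h2 : List.insertIdx q p x = q.take p ++ x :: q.drop p := by
    have h3 := insertIdx_eq (q.take p) (q.drop p) x
    rw [hlen, List.take_append_drop] at h3
    exact h3
  have hsum : q.count m = (q.take p).count m + (q.drop p).count m := by
    conv_lhs => rw [← List.take_append_drop p q]
    rw [List.count_append]
  rw [h2, hsum, List.count_append, List.count_cons]
  rcases eq_or_ne x m with h | h <;> simp [h] <;> omega

lemma buildQ_succ {n : ℕ} (r : Fin n → Fin n → Prop) [DecidableRel r] (i : ℕ) (h : i < n) :
    buildQ r (i + 1) =
      (buildQ r i).insertIdx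
        (skipRun (buildQ r i) (level r ⟨i, h⟩)
          (afterKth (buildQ r i) (level r ⟨i, h⟩ - 1) (comparCount r ⟨i, h⟩)))
        (level r ⟨i, h⟩) := by
  rw [buildQ]
  simp [h]

lemma length_buildQ {n : ℕ} (r : Fin n → Fin n → Prop) [DecidableRel r] :
    ∀ i, i ≤ n → (buildQ r i).length = i := by
  intro i
  induction i with
  | zero => intro _; rw [buildQ]; rfl
  | succ i ih =>
    intro hi
    have h' : i < n := hi
    have hlen := ih (le_of_lt h')
    rw [buildQ_succ r i h',
      List.length_insertIdx_of_le_length (skipRun_le_length _ _ _ (afterKth_le_length _ _ _)) _, hlen]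

lemma count_buildQ {n : ℕ} (r : Fin n → Fin n → Prop) [DecidableRel r] :
    ∀ i, i ≤ n → ∀ m, (buildQ r i).count m =
      (Finset.univ.filter (fun j : Fin n => j.val < i ∧ level r j = m)).card := by
  intro i
  induction i with
  | zero =>
    intro _ m
    rw [buildQ]
    simp
  | succ i ih =>
    intro hi m
    have h' : i < n := hi
    have hpos : skipRun (buildQ r i) (level r ⟨i, h'⟩)
        (afterKth (buildQ r i) (level r ⟨i, h'⟩ - 1) (comparCount r ⟨i, h'⟩))
        ≤ (buildQ r i).length :=
      skipRun_le_length _ _ _ (afterKth_le_length _ _ _)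
    rw [buildQ_succ r i h', count_insertIdx _ _ _ _ hpos, ih (le_of_lt h') m]
    have hsplit : (Finset.univ.filter (fun j : Fin n => j.val < i + 1 ∧ level r j = m)) =
        (Finset.univ.filter (fun j : Fin n => j.val < i ∧ level r j = m)) ∪
        (Finset.univ.filter (fun j : Fin n => j = ⟨i, h'⟩ ∧ level r j = m)) := by
      rw [← Finset.filter_or]
      apply Finset.filter_congr
      intro j _
      constructor
      · rintro ⟨h1, h2⟩
        rcases Nat.lt_succ_iff_lt_or_eq.mp h1 with h | h
        · exact Or.inl ⟨h, h2⟩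
        · exact Or.inr ⟨Fin.ext h, h2⟩
      · rintro (⟨h1, h2⟩ | ⟨h1, h2⟩)
        · exact ⟨by omega, h2⟩
        · refine ⟨?_, h2⟩
          subst h1
          simp
    rw [hsplit, Finset.card_union_of_disjoint]
    · congr 1
      by_cases hm : level r ⟨i, h'⟩ = m
      · have : (Finset.univ.filter (fun j : Fin n => j = ⟨i, h'⟩ ∧ level r j = m)) =
            {⟨i, h'⟩} := by
          ext j
          simp only [Finset.mem_filter, Finset.mem_univ, true_and, Finset.mem_singleton]
          constructor
          · exact fun h => h.1
          · rintro rfl; exact ⟨rfl, hm⟩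
        rw [this, hm]
        simp
      · have : (Finset.univ.filter (fun j : Fin n => j = ⟨i, h'⟩ ∧ level r j = m)) = ∅ := by
          ext j
          simp only [Finset.mem_filter, Finset.mem_univ, true_and, Finset.notMem_empty,
            iff_false, not_and]
          rintro rfl
          exact hm
        rw [this, if_neg hm]
        simp
    · rw [Finset.disjoint_filter]
      rintro j _ ⟨h1, _⟩ ⟨rfl, _⟩
      simp at h1

lemma smooth_buildQ {n : ℕ} (r : Fin n → Fin n → Prop) [DecidableRel r] (h : IsUIO r) :
    ∀ i, i ≤ n → QSmooth (buildQ r i) := by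
  intro i
  induction i with
  | zero =>
    intro _
    rw [buildQ]
    exact ⟨by simp, List.isChain_nil⟩
  | succ i ih =>
    intro hi
    have h' : i < n := hi
    rw [buildQ_succ r i h']
    apply insert_smooth _ _ _ (ih (le_of_lt h'))
    by_cases hl : level r ⟨i, h'⟩ = 0
    · left
      refine ⟨hl, ?_⟩
      rw [comparCount, Finset.card_eq_zero, Finset.filter_eq_empty_iff]
      intro j _
      rw [hl]
      simp
    · right
      refine ⟨by omega, ?_, ?_⟩
      · obtain ⟨j, hj1, hj2, hj3⟩ := level_pos_exists r ⟨i, h'⟩ hl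
        rw [comparCount, Nat.one_le_iff_ne_zero, ← Nat.pos_iff_ne_zero, Finset.card_pos]
        exact ⟨j, by simp [hj3, hj1]⟩
      · rw [count_buildQ r i (le_of_lt h')]
        rw [comparCount]
        apply Finset.card_le_card
        intro j hj
        simp only [Finset.mem_filter, Finset.mem_univ, true_and] at hj ⊢
        obtain ⟨hj1, hj2⟩ := hj
        refine ⟨?_, by omega⟩
        rcases hj2 with hji | hij
        · exact h.1 _ _ hji
        · exfalso
          have hlt : (⟨i, h'⟩ : Fin n) < j := h.1 _ _ hij
          have := level_lt r ⟨i, h'⟩ j hij hlt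
          omega

/-- For any unit interval order `U`, the word `q(U)` produced by
the insertion algorithm is the area sequence of a Dyck path: its first entry is
`0` and each entry is at most one more than the preceding entry. -/
theorem qList_isAreaSeq {n : ℕ} (r : Fin n → Fin n → Prop) [DecidableRel r]
    (h : IsUIO r) :
    (qList r).getD 0 0 = 0 ∧
    ∀ i : ℕ, i + 1 < (qList r).length →
      (qList r).getD (i + 1) 0 ≤ (qList r).getD i 0 + 1 := by
  obtain ⟨h0, hc⟩ := smooth_buildQ r h n le_rfl
  constructor
  · cases hq : buildQ r n with
    | nil => simp [qList, hq]
    | cons a t =>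
      have := h0 a (by rw [hq]; rfl)
      simp [qList, hq, this]
  · intro i hi
    unfold List.Chain' at hc
    rw [List.isChain_iff_getElem] at hc
    have hlen : i + 1 < (buildQ r n).length := hi
    have := hc i (by omega)
    rw [qList, List.getD_eq_getElem _ _ (by omega : i < (buildQ r n).length),
      List.getD_eq_getElem _ _ hlen]
    simpa [List.get_eq_getElem] using this
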